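/- arXiv:1410.4191 — 2 statements merged into one kernel-verified Lean document; each statement's English description precedes it below -/
import Mathlib

section
/- Let G be a graph, B a minimum zero forcing set of G, and F a set of forces of B. Then pt(G, Rev(F)) ≤ pt(G, F), where Rev(F) is viewed as a set of forces of Term(F). -/
open SimpleGraph

variable {V : Type*}

/-- One simultaneous round of the color change rule: all currently forceable
vertices become black. -/
def forceStep (G : SimpleGraph V) (S : Set V) : Set V :=
  S ∪ {w | ∃ v ∈ S, G.Adj v w ∧ ∀ u, G.Adj v u → u ∉ S → u = w}

/-- The (cumulative) set of black vertices after `t` simultaneous rounds,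
starting from `B`; so `B^{(t)} = propSet G B t \ propSet G B (t-1)`. -/
def propSet (G : SimpleGraph V) (B : Set V) : ℕ → Set V
  | 0 => B
  | t + 1 => forceStep G (propSet G B t)

/-- `B` is a zero forcing set of `G`. -/
def IsZFSet (G : SimpleGraph V) (B : Set V) : Prop := ∃ t, propSet G B t = Set.univ

/-- The zero forcing number `Z(G)`. -/
noncomputable def zfNum (G : SimpleGraph V) : ℕ :=
  sInf {n | ∃ B : Set V, IsZFSet G B ∧ B.ncard = n}

/-- `B` is a minimum zero forcing set of `G`. -/
def IsMinZFSet (G : SimpleGraph V) (B : Set V) : Prop := IsZFSet G B ∧ B.ncard = zfNum G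

/-- The propagation time `pt(G,B)` of a zero forcing set `B`. -/
noncomputable def ptSet (G : SimpleGraph V) (B : Set V) : ℕ :=
  sInf {t | propSet G B t = Set.univ}

/-- The minimum propagation time `pt(G)`. -/
noncomputable def ptMin (G : SimpleGraph V) : ℕ :=
  sInf (ptSet G '' {B | IsMinZFSet G B})

/-- The maximum propagation time `PT(G)`. -/
noncomputable def ptMax (G : SimpleGraph V) : ℕ :=
  sSup (ptSet G '' {B | IsMinZFSet G B})

/-- `IsChronList G S L` : starting from black set `S`, the list `L` is a valid
chronological list of forces, performed one at a time, ending with all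
vertices black. -/
def IsChronList (G : SimpleGraph V) : Set V → List (V × V) → Prop
  | S, [] => S = Set.univ
  | S, (v, w) :: L =>
      v ∈ S ∧ w ∉ S ∧ G.Adj v w ∧ (∀ u, G.Adj v u → u ∉ S → u = w) ∧
        IsChronList G (insert w S) L

/-- `F` is a set of forces of `B`: the unordered set of forces of some
chronological list of forces of `B`. -/
def IsForceSet (G : SimpleGraph V) (B : Set V) (F : Set (V × V)) : Prop :=
  ∃ L : List (V × V), IsChronList G B L ∧ {p | p ∈ L} = F

/-- The terminus of a set of forces: the vertices performing no force. -/
def termSet (F : Set (V × V)) : Set V := {v | ∀ w, (v, w) ∉ F}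

/-- The reverse set of forces. -/
def revSet (F : Set (V × V)) : Set (V × V) := (fun p : V × V => (p.2, p.1)) '' F

/-- The (cumulative) set of black vertices after `t` rounds when propagating
using only the forces in `F`, starting from `B`;
so `F^{(t)} = fpropSet G B F t \ fpropSet G B F (t-1)`. -/
def fpropSet (G : SimpleGraph V) (B : Set V) (F : Set (V × V)) : ℕ → Set V
  | 0 => B
  | t + 1 => fpropSet G B F t ∪
      {w | ∃ v, (v, w) ∈ F ∧ v ∈ fpropSet G B F t ∧ w ∉ fpropSet G B F t ∧
        ∀ u, G.Adj v u → u ∉ fpropSet G B F t → u = w}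

/-- The propagation time `pt(G,F)` of a set of forces `F` of `B`. -/
noncomputable def ptForces (G : SimpleGraph V) (B : Set V) (F : Set (V × V)) : ℕ :=
  sInf {t | fpropSet G B F t = Set.univ}

/-- `B` is an efficient zero forcing set of `G`. -/
def IsEffZFSet (G : SimpleGraph V) (B : Set V) : Prop :=
  IsMinZFSet G B ∧ ptSet G B = ptMin G

/-- `F` is an efficient set of forces of the minimum zero forcing set `B`. -/
def IsEffForces (G : SimpleGraph V) (B : Set V) (F : Set (V × V)) : Prop :=
  IsMinZFSet G B ∧ IsForceSet G B F ∧ ptForces G B F = ptMin G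

lemma fpropSet_mono (G : SimpleGraph V) (B : Set V) (F : Set (V × V)) {t s : ℕ}
    (h : t ≤ s) : fpropSet G B F t ⊆ fpropSet G B F s := by
  have : Monotone (fpropSet G B F) := by
    apply monotone_nat_of_le_succ
    intro n x hx
    exact Set.mem_union_left _ hx
  exact this h

lemma chron_target_not_mem (G : SimpleGraph V) :
    ∀ (L : List (V × V)) (S : Set V), IsChronList G S L →
      ∀ v w : V, (v, w) ∈ L → w ∉ S := by
  intro L
  induction L with
  | nil => intro S _ v w h; simp at h
  | cons a L ih =>
    obtain ⟨a1, a2⟩ := a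
    intro S hC v w hmem
    obtain ⟨_, ha2, _, _, hrest⟩ := hC
    rcases List.mem_cons.1 hmem with h | h
    · injection h with h1 h2; subst h1; subst h2; exact ha2
    · intro hw
      exact ih _ hrest v w h (Set.mem_insert_iff.2 (Or.inr hw))

lemma chron_target_unique (G : SimpleGraph V) :
    ∀ (L : List (V × V)) (S : Set V), IsChronList G S L →
      ∀ v v' w : V, (v, w) ∈ L → (v', w) ∈ L → v = v' := by
  intro L
  induction L with
  | nil => intro S _ v v' w h; simp at h
  | cons a L ih =>
    obtain ⟨a1, a2⟩ := a
    intro S hC v v' w h1 h2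
    obtain ⟨_, ha2, _, _, hrest⟩ := hC
    rcases List.mem_cons.1 h1 with g1 | g1 <;> rcases List.mem_cons.1 h2 with g2 | g2
    · injection g1 with e1 e2; injection g2 with e3 e4; rw [e1, e3]
    · injection g1 with e1 e2; subst e2
      exact absurd (Set.mem_insert _ _)
        (chron_target_not_mem G L _ hrest v' w g2)
    · injection g2 with e1 e2; subst e2
      exact absurd (Set.mem_insert _ _)
        (chron_target_not_mem G L _ hrest v w g1)
    · exact ih _ hrest v v' w g1 g2

lemma chron_fprop (G : SimpleGraph V) (B : Set V) (F : Set (V × V)) :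
    ∀ (L : List (V × V)) (S : Set V), IsChronList G S L → (∀ p ∈ L, p ∈ F) →
      ∀ t, S ⊆ fpropSet G B F t → fpropSet G B F (t + L.length) = Set.univ := by
  intro L
  induction L with
  | nil =>
    intro S hC _ t hS
    simp only [List.length_nil, Nat.add_zero]
    exact Set.eq_univ_of_univ_subset (hC ▸ hS)
  | cons a L ih =>
    obtain ⟨a1, a2⟩ := a
    intro S hC hLF t hS
    obtain ⟨h1, h2, h3, h4, hrest⟩ := hC
    have hstep : insert a2 S ⊆ fpropSet G B F (t + 1) := by
      intro x hx
      rcases Set.mem_insert_iff.1 hx with rfl | hx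
      · by_cases hx2 : x ∈ fpropSet G B F t
        · exact Set.mem_union_left _ hx2
        · refine Set.mem_union_right _ ⟨a1, hLF _ List.mem_cons_self, hS h1, hx2, ?_⟩
          intro u hu hu'
          exact h4 u hu (fun huS => hu' (hS huS))
      · exact Set.mem_union_left _ (hS hx)
    have hres := ih (insert a2 S) hrest (fun p hp => hLF p (List.mem_cons_of_mem _ hp))
      (t + 1) hstep
    have harith2 : t + 1 + L.length = t + (L.length + 1) := by omega
    rw [harith2] at hres
    simpa [List.length_cons] using hres

lemma exists_transition (G : SimpleGraph V) (B : Set V) (F : Set (V × V)) {w : V} {n : ℕ}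
    (h0 : w ∉ fpropSet G B F 0) (hn : w ∈ fpropSet G B F n) :
    ∃ t, w ∉ fpropSet G B F t ∧ w ∈ fpropSet G B F (t + 1) := by
  induction n with
  | zero => exact absurd hn h0
  | succ n ihn =>
    by_cases h : w ∈ fpropSet G B F n
    · exact ihn h
    · exact ⟨n, h, hn⟩

/-- For a minimum zero forcing set `B` and a set of forces `F` of `B`,
`pt(G, Rev(F)) ≤ pt(G, F)`. -/
theorem ptForces_rev_le {V : Type*} [Finite V] (G : SimpleGraph V) (B : Set V)
    (F : Set (V × V)) (hB : IsMinZFSet G B) (hF : IsForceSet G B F) :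
    ptForces G (termSet F) (revSet F) ≤ ptForces G B F := by
  classical
  obtain ⟨L, hL, hLF⟩ := hF
  have hFL : ∀ {q : V × V}, q ∈ F ↔ q ∈ L := by
    intro q; rw [← hLF]; rfl
  have huniq : ∀ v v' w : V, (v, w) ∈ F → (v', w) ∈ F → v = v' := fun v v' w h1 h2 =>
    chron_target_unique G L B hL v v' w (hFL.1 h1) (hFL.1 h2)
  have htarget : ∀ v w : V, (v, w) ∈ F → w ∉ B := fun v w h =>
    chron_target_not_mem G L B hL v w (hFL.1 h)
  have hreach : fpropSet G B F L.length = Set.univ := by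
    have := chron_fprop G B F L B hL (fun p hp => hFL.2 hp) 0 (by rfl)
    simpa using this
  have hp : fpropSet G B F (ptForces G B F) = Set.univ :=
    Nat.sInf_mem (⟨L.length, hreach⟩ : {t | fpropSet G B F t = Set.univ}.Nonempty)
  set p := ptForces G B F with hpdef
  have fire : ∀ u u' : V, (u, u') ∈ F → ∃ t', u ∈ fpropSet G B F t' ∧
      u' ∉ fpropSet G B F t' ∧ ∀ x, G.Adj u x → x ∉ fpropSet G B F t' → x = u' := by
    intro u u' huu
    obtain ⟨t', h1, h2⟩ := exists_transition G B F (htarget u u' huu)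
      (show u' ∈ fpropSet G B F p by rw [hp]; trivial)
    simp only [fpropSet, Set.mem_union, Set.mem_setOf_eq] at h2
    rcases h2 with h2 | ⟨v', hv'F, hv'mem, _, hforce⟩
    · exact absurd h2 h1
    · have hvu : v' = u := huniq v' u u' hv'F huu
      subst hvu
      exact ⟨t', hv'mem, h1, hforce⟩
  have key : ∀ s, ∀ x : V,
      (x ∈ termSet F ∨ ∃ w, (x, w) ∈ F ∧ w ∉ fpropSet G B F (p - s)) →
      x ∈ fpropSet G (termSet F) (revSet F) s := by
    intro s
    induction s with
    | zero =>
      intro x hx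
      rcases hx with hx | ⟨w, _, hwB⟩
      · exact hx
      · rw [Nat.sub_zero, hp] at hwB
        exact absurd (Set.mem_univ w) hwB
    | succ s ih =>
      intro x hx
      rcases hx with hx | ⟨w, hwF, hw⟩
      · exact fpropSet_mono G (termSet F) (revSet F) (Nat.zero_le (s + 1)) hx
      · by_cases hw' : w ∈ fpropSet G B F (p - s)
        · -- w was forced at forward round exactly p - s, by x
          have hne : p - s ≠ 0 := by
            intro h0
            have h1 : p - (s + 1) = 0 := by omega
            rw [h0] at hw'
            rw [h1] at hw
            exact hw hw'
          have hps : p - s = (p - (s + 1)) + 1 := by omega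
          have hw2 : w ∈ fpropSet G B F ((p - (s + 1)) + 1) := hps ▸ hw'
          simp only [fpropSet, Set.mem_union, Set.mem_setOf_eq] at hw2
          rcases hw2 with h | ⟨v', hv'F, hv'mem, hwnot, hforce⟩
          · exact absurd h hw
          · have hvx : x = v' := (huniq v' x w hv'F hwF).symm
            subst hvx
            -- w is black in the reverse process at time s
            have hwR : w ∈ fpropSet G (termSet F) (revSet F) s := by
              by_cases hwT : w ∈ termSet F
              · exact ih w (Or.inl hwT)
              · simp only [termSet, Set.mem_setOf_eq, not_forall, not_not] at hwT
                obtain ⟨w', hww'⟩ := hwT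
                obtain ⟨t', hwt', hw't', _⟩ := fire w w' hww'
                have ht' : p - s ≤ t' := by
                  by_contra hlt
                  push_neg at hlt
                  have hle : t' ≤ p - (s + 1) := by omega
                  exact hw (fpropSet_mono G B F hle hwt')
                exact ih w (Or.inr ⟨w', hww',
                  fun hmem => hw't' (fpropSet_mono G B F ht' hmem)⟩)
            by_cases hxR : x ∈ fpropSet G (termSet F) (revSet F) s
            · exact fpropSet_mono G (termSet F) (revSet F) (Nat.le_succ s) hxR
            · refine Set.mem_union_right _ ⟨w, ⟨(x, w), hwF, rfl⟩, hwR, hxR, ?_⟩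
              intro u hu huR
              by_contra hux
              apply huR
              by_cases huT : u ∈ termSet F
              · exact ih u (Or.inl huT)
              · simp only [termSet, Set.mem_setOf_eq, not_forall, not_not] at huT
                obtain ⟨u', huu'⟩ := huT
                obtain ⟨t', hut', hu't', hufor⟩ := fire u u' huu'
                refine ih u (Or.inr ⟨u', huu', ?_⟩)
                intro hu'mem
                have ht' : t' < p - s := by
                  by_contra hge
                  push_neg at hge
                  exact hu't' (fpropSet_mono G B F hge hu'mem)
                have hwt' : w ∉ fpropSet G B F t' := fun hmem =>
                  hw (fpropSet_mono G B F (by omega) hmem)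
                have hwu' : w = u' := hufor w (G.adj_symm hu) hwt'
                rw [← hwu'] at huu'
                exact hux (huniq x u w hwF huu').symm
        · exact fpropSet_mono G (termSet F) (revSet F) (Nat.le_succ s)
            (ih x (Or.inr ⟨w, hwF, hw'⟩))
  have hRuniv : fpropSet G (termSet F) (revSet F) p = Set.univ := by
    apply Set.eq_univ_of_forall
    intro x
    apply key p x
    by_cases hxT : x ∈ termSet F
    · exact Or.inl hxT
    · simp only [termSet, Set.mem_setOf_eq, not_forall, not_not] at hxT
      obtain ⟨w, hw⟩ := hxT
      refine Or.inr ⟨w, hw, ?_⟩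
      rw [Nat.sub_self]
      exact htarget x w hw
  exact Nat.sInf_le hRuniv
end

section
/- For a graph G the following are equivalent: (1) pt(G) = |G| − 1; (2) PT(G) = |G| − 1; (3) Z(G) = 1; (4) G is a path. -/
open SimpleGraph

variable {V : Type*}

section Aux

variable {V : Type*}

lemma propSet_subset_succ (G : SimpleGraph V) (B : Set V) (t : ℕ) :
    propSet G B t ⊆ propSet G B (t + 1) :=
  Set.subset_union_left

lemma propSet_mono (G : SimpleGraph V) (B : Set V) {s t : ℕ} (h : s ≤ t) :
    propSet G B s ⊆ propSet G B t := by
  induction t, h using Nat.le_induction with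
  | base => exact subset_rfl
  | succ t ht ih => exact ih.trans (propSet_subset_succ G B t)

lemma propSet_stall (G : SimpleGraph V) (B : Set V) {t : ℕ}
    (h : propSet G B (t + 1) = propSet G B t) (k : ℕ) :
    propSet G B (t + k) = propSet G B t := by
  induction k with
  | zero => rfl
  | succ k ih =>
      have h2 : propSet G B (t + (k + 1)) = forceStep G (propSet G B (t + k)) := rfl
      rw [h2, ih]
      exact h

lemma propSet_ssubset (G : SimpleGraph V) {B : Set V} (hB : IsZFSet G B) {t : ℕ}
    (h : propSet G B t ≠ Set.univ) : propSet G B t ⊂ propSet G B (t + 1) := by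
  refine (propSet_subset_succ G B t).ssubset_of_ne fun he => h ?_
  obtain ⟨T, hT⟩ := hB
  have h1 : ∀ k, propSet G B (t + k) = propSet G B t := propSet_stall G B he.symm
  have h2 : propSet G B T ⊆ propSet G B (t + T) := propSet_mono G B (Nat.le_add_left T t)
  rw [hT, h1 T] at h2
  exact Set.univ_subset_iff.mp h2

lemma propSet_ptSet (G : SimpleGraph V) {B : Set V} (hB : IsZFSet G B) :
    propSet G B (ptSet G B) = Set.univ :=
  Nat.sInf_mem hB

lemma propSet_ne_univ_of_lt_ptSet (G : SimpleGraph V) {B : Set V} {t : ℕ}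
    (ht : t < ptSet G B) : propSet G B t ≠ Set.univ := fun h =>
  absurd (Nat.sInf_le h) (not_le.mpr ht)

lemma ncard_propSet_ge [Finite V] (G : SimpleGraph V) {B : Set V} (hB : IsZFSet G B) :
    ∀ t, t ≤ ptSet G B → B.ncard + t ≤ (propSet G B t).ncard := by
  intro t
  induction t with
  | zero => intro _; simp [propSet]
  | succ t ih =>
      intro ht
      have ht' : t < ptSet G B := lt_of_lt_of_le (Nat.lt_succ_self t) ht
      have hss := propSet_ssubset G hB (propSet_ne_univ_of_lt_ptSet G ht')
      have hlt : (propSet G B t).ncard < (propSet G B (t + 1)).ncard :=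
        Set.ncard_lt_ncard hss (Set.toFinite _)
      have h2 := ih ht'.le
      omega

lemma ptSet_add_ncard_le [Finite V] (G : SimpleGraph V) {B : Set V} (hB : IsZFSet G B) :
    B.ncard + ptSet G B ≤ Nat.card V := by
  have h := ncard_propSet_ge G hB (ptSet G B) le_rfl
  have h2 : (propSet G B (ptSet G B)).ncard = Nat.card V := by
    rw [propSet_ptSet G hB, Set.ncard_univ]
  omega

lemma zfNum_set_nonempty (G : SimpleGraph V) :
    {n | ∃ B : Set V, IsZFSet G B ∧ B.ncard = n}.Nonempty :=
  ⟨(Set.univ : Set V).ncard, Set.univ, ⟨0, rfl⟩, rfl⟩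

lemma exists_minZFSet (G : SimpleGraph V) : ∃ B, IsMinZFSet G B := by
  obtain ⟨B, h1, h2⟩ := Nat.sInf_mem (zfNum_set_nonempty G)
  exact ⟨B, h1, h2⟩

lemma propSet_empty (G : SimpleGraph V) (t : ℕ) : propSet G ∅ t = ∅ := by
  induction t with
  | zero => rfl
  | succ t ih =>
      show forceStep G (propSet G ∅ t) = ∅
      rw [ih]
      simp [forceStep]

lemma one_le_zfNum [Finite V] [Nonempty V] (G : SimpleGraph V) : 1 ≤ zfNum G := by
  by_contra h
  push_neg at h
  interval_cases hz : zfNum G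
  obtain ⟨B, hB, hc⟩ := Nat.sInf_mem (zfNum_set_nonempty G)
  have hz' : B.ncard = 0 := by rw [show sInf _ = zfNum G from rfl, hz] at hc; exact hc
  have hBe : B = ∅ := (Set.ncard_eq_zero (Set.toFinite B)).mp hz'
  obtain ⟨t, ht⟩ := hB
  rw [hBe, propSet_empty] at ht
  exact Set.empty_ne_univ ht

end Aux
section Path

variable {V : Type*} {G : SimpleGraph V} {n : ℕ}

lemma path_propSet (hn : 0 < n) (e : Fin n ≃ V)
    (hadj : ∀ i j : Fin n, G.Adj (e i) (e j) ↔ ((i : ℕ) + 1 = (j : ℕ) ∨ (j : ℕ) + 1 = (i : ℕ)))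
    (t : ℕ) :
    propSet G {e ⟨0, hn⟩} t = {x | ∃ i : Fin n, (i : ℕ) ≤ t ∧ e i = x} := by
  induction t with
  | zero =>
      ext x
      simp only [propSet, Set.mem_singleton_iff, Set.mem_setOf_eq]
      constructor
      · rintro rfl
        exact ⟨⟨0, hn⟩, le_rfl, rfl⟩
      · rintro ⟨i, hi, rfl⟩
        have h0 : (i : ℕ) = 0 := Nat.le_zero.mp hi
        exact congrArg e (Fin.ext h0).symm |>.symm
  | succ t ih =>
      show forceStep G (propSet G {e ⟨0, hn⟩} t) = _
      rw [ih]
      ext x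
      simp only [forceStep, Set.mem_union, Set.mem_setOf_eq]
      constructor
      · rintro (⟨i, hi, rfl⟩ | ⟨v', ⟨i, hi, rfl⟩, hadj', -⟩)
        · exact ⟨i, hi.trans (Nat.le_succ t), rfl⟩
        · obtain ⟨j, rfl⟩ := e.surjective x
          rcases (hadj i j).mp hadj' with h1 | h1
          · exact ⟨j, by omega, rfl⟩
          · exact ⟨j, by omega, rfl⟩
      · rintro ⟨j, hj, rfl⟩
        rcases Nat.lt_or_ge (j : ℕ) (t + 1) with h | h
        · exact Or.inl ⟨j, by omega, rfl⟩
        · have hjt : (j : ℕ) = t + 1 := le_antisymm hj h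
          have htn : t < n := by have := j.isLt; omega
          refine Or.inr ⟨e ⟨t, htn⟩, ⟨⟨t, htn⟩, le_rfl, rfl⟩, ?_, ?_⟩
          · exact (hadj _ _).mpr (Or.inl (by simp [hjt]))
          · intro u hu hu'
            obtain ⟨k, rfl⟩ := e.surjective u
            rcases (hadj _ _).mp hu with h1 | h1
            · simp only [Fin.val_mk] at h1
              have hkj : k = j := Fin.ext (by omega)
              rw [hkj]
            · simp only [Fin.val_mk] at h1
              exact absurd ⟨k, by omega, rfl⟩ hu'

lemma path_isZF (hn : 0 < n) (e : Fin n ≃ V)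
    (hadj : ∀ i j : Fin n, G.Adj (e i) (e j) ↔ ((i : ℕ) + 1 = (j : ℕ) ∨ (j : ℕ) + 1 = (i : ℕ))) :
    IsZFSet G {e ⟨0, hn⟩} := by
  refine ⟨n - 1, ?_⟩
  rw [path_propSet hn e hadj]
  ext x
  simp only [Set.mem_setOf_eq, Set.mem_univ, iff_true]
  obtain ⟨j, rfl⟩ := e.surjective x
  exact ⟨j, by have := j.isLt; omega, rfl⟩

lemma path_ptSet (hn : 0 < n) (e : Fin n ≃ V)
    (hadj : ∀ i j : Fin n, G.Adj (e i) (e j) ↔ ((i : ℕ) + 1 = (j : ℕ) ∨ (j : ℕ) + 1 = (i : ℕ))) :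
    ptSet G {e ⟨0, hn⟩} = n - 1 := by
  have hzf := path_isZF hn e hadj
  obtain ⟨T, hT⟩ := hzf
  apply le_antisymm
  · apply Nat.sInf_le
    show propSet G {e ⟨0, hn⟩} (n - 1) = Set.univ
    rw [path_propSet hn e hadj]
    ext x
    simp only [Set.mem_setOf_eq, Set.mem_univ, iff_true]
    obtain ⟨j, rfl⟩ := e.surjective x
    exact ⟨j, by have := j.isLt; omega, rfl⟩
  · by_contra h
    push_neg at h
    have hu := propSet_ptSet G ⟨T, hT⟩
    rw [path_propSet hn e hadj] at hu
    have hmem : e ⟨n - 1, by omega⟩ ∈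
        {x | ∃ i : Fin n, (i : ℕ) ≤ ptSet G {e ⟨0, hn⟩} ∧ e i = x} := by
      rw [hu]; trivial
    obtain ⟨i, hi, hei⟩ := hmem
    have h2 : (i : ℕ) = n - 1 := congrArg Fin.val (e.injective hei)
    omega

lemma path_singleton_zf (hn : 0 < n) (e : Fin n ≃ V)
    (hadj : ∀ i j : Fin n, G.Adj (e i) (e j) ↔ ((i : ℕ) + 1 = (j : ℕ) ∨ (j : ℕ) + 1 = (i : ℕ)))
    {u : V} (hu : IsZFSet G {u}) :
    u = e ⟨0, hn⟩ ∨ u = e ⟨n - 1, by omega⟩ := by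
  obtain ⟨j, rfl⟩ := e.surjective u
  by_contra hcon
  push_neg at hcon
  obtain ⟨h0, h1⟩ := hcon
  have hj0 : (j : ℕ) ≠ 0 := fun hh => h0 (congrArg e (Fin.ext hh))
  have hj1 : (j : ℕ) ≠ n - 1 := fun hh => h1 (congrArg e (Fin.ext hh))
  have hjlt := j.isLt
  have hstep : forceStep G ({e j} : Set V) = {e j} := by
    apply Set.union_eq_self_of_subset_right
    rintro w ⟨v', hv', hadjw, hforce⟩
    rw [Set.mem_singleton_iff] at hv'
    subst hv'
    exfalso
    have hm1 : (j : ℕ) - 1 < n := by omega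
    have hp1 : (j : ℕ) + 1 < n := by omega
    have ha1 : G.Adj (e j) (e ⟨(j : ℕ) - 1, hm1⟩) := (hadj _ _).mpr (Or.inr (by simp; omega))
    have ha2 : G.Adj (e j) (e ⟨(j : ℕ) + 1, hp1⟩) := (hadj _ _).mpr (Or.inl (by simp))
    have hne1 : e ⟨(j : ℕ) - 1, hm1⟩ ∉ ({e j} : Set V) := by
      simp only [Set.mem_singleton_iff]
      intro hh
      have := congrArg Fin.val (e.injective hh)
      simp at this
      omega
    have hne2 : e ⟨(j : ℕ) + 1, hp1⟩ ∉ ({e j} : Set V) := by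
      simp only [Set.mem_singleton_iff]
      intro hh
      have := congrArg Fin.val (e.injective hh)
      simp at this
    have he1 := hforce _ ha1 hne1
    have he2 := hforce _ ha2 hne2
    have := congrArg Fin.val (e.injective (he1.trans he2.symm))
    simp at this
  have hall : ∀ t, propSet G {e j} t = {e j} := by
    intro t
    have := propSet_stall G {e j} (t := 0) hstep t
    simpa [propSet] using this
  obtain ⟨t, ht⟩ := hu
  rw [hall t] at ht
  have : e ⟨0, hn⟩ ∈ ({e j} : Set V) := by rw [ht]; trivial
  rw [Set.mem_singleton_iff] at this
  exact h0 this.symm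

lemma path_case [Finite V] (hn : 0 < n) (e : Fin n ≃ V)
    (hadj : ∀ i j : Fin n, G.Adj (e i) (e j) ↔ ((i : ℕ) + 1 = (j : ℕ) ∨ (j : ℕ) + 1 = (i : ℕ))) :
    zfNum G = 1 ∧ ptMin G = n - 1 ∧ ptMax G = n - 1 ∧ Nat.card V = n := by
  haveI : Nonempty V := ⟨e ⟨0, hn⟩⟩
  have hzf0 := path_isZF hn e hadj
  have hz1 : zfNum G = 1 :=
    le_antisymm (Nat.sInf_le ⟨{e ⟨0, hn⟩}, hzf0, Set.ncard_singleton _⟩) (one_le_zfNum G)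
  -- the reversed equivalence
  set e' : Fin n ≃ V := Fin.revPerm.trans e with he'
  have he'val : ∀ i : Fin n, e' i = e i.rev := fun i => rfl
  have hadj' : ∀ i j : Fin n,
      G.Adj (e' i) (e' j) ↔ ((i : ℕ) + 1 = (j : ℕ) ∨ (j : ℕ) + 1 = (i : ℕ)) := by
    intro i j
    rw [he'val, he'val, hadj]
    have hi := i.isLt
    have hj := j.isLt
    rw [Fin.val_rev, Fin.val_rev]
    omega
  have he'0 : e' ⟨0, hn⟩ = e ⟨n - 1, by omega⟩ := by
    rw [he'val]
    exact congrArg e (Fin.ext (by rw [Fin.val_rev]))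
  have hmin : ∀ B, IsMinZFSet G B → ptSet G B = n - 1 := by
    rintro B ⟨hBzf, hBc⟩
    rw [hz1] at hBc
    obtain ⟨u, rfl⟩ := Set.ncard_eq_one.mp hBc
    rcases path_singleton_zf hn e hadj hBzf with h | h
    · rw [h]; exact path_ptSet hn e hadj
    · rw [h, ← he'0]; exact path_ptSet hn e' hadj'
  have himg : ptSet G '' {B | IsMinZFSet G B} = {n - 1} := by
    apply Set.eq_singleton_iff_unique_mem.mpr
    constructor
    · exact ⟨{e ⟨0, hn⟩}, ⟨hzf0, by rw [hz1]; exact Set.ncard_singleton _⟩,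
        path_ptSet hn e hadj⟩
    · rintro x ⟨B, hB, rfl⟩
      exact hmin B hB
  refine ⟨hz1, ?_, ?_, Nat.card_eq_of_equiv_fin e.symm⟩
  · show sInf _ = n - 1
    rw [himg, csInf_singleton]
  · show sSup _ = n - 1
    rw [himg, csSup_singleton]

end Path
section Main

variable {V : Type*}

lemma singleton_zf_path [Finite V] {G : SimpleGraph V} {v : V} (hv : IsZFSet G {v}) :
    ∃ n, 0 < n ∧ Nonempty (G ≃g SimpleGraph.pathGraph n) := by
  have key : ∀ t, t ≤ ptSet G {v} → ∃ f : ℕ → V,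
      propSet G {v} t = {x | ∃ i ≤ t, f i = x} ∧
      (∀ i ≤ t, ∀ j ≤ t, f i = f j → i = j) ∧
      (∀ i ≤ t, ∀ j ≤ t, (G.Adj (f i) (f j) ↔ (i + 1 = j ∨ j + 1 = i))) ∧
      (∀ i < t, ∀ w, G.Adj (f i) w → w ∈ propSet G {v} t) := by
    intro t
    induction t with
    | zero =>
        intro _
        refine ⟨fun _ => v, ?_, ?_, ?_, ?_⟩
        · ext x
          simp [propSet, eq_comm]
        · intro i hi j hj _
          omega
        · intro i hi j hj
          simp only [Nat.le_zero] at hi hj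
          subst hi; subst hj
          simp
        · intro i hi
          omega
    | succ t ih =>
        intro ht
        have htT : t < ptSet G {v} := lt_of_lt_of_le (Nat.lt_succ_self t) ht
        obtain ⟨f, hset, hinj, hadj, hwhite⟩ := ih htT.le
        have hne := propSet_ne_univ_of_lt_ptSet G htT
        have hss := propSet_ssubset G hv hne
        obtain ⟨w, hw1, hw2⟩ := Set.exists_of_ssubset hss
        have hw1' : w ∈ forceStep G (propSet G {v} t) := hw1
        simp only [forceStep, Set.mem_union, Set.mem_setOf_eq] at hw1'
        rcases hw1' with h | ⟨v', hv'S, hadjw, hforce⟩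
        · exact absurd h hw2
        rw [hset] at hv'S
        obtain ⟨i, hi, rfl⟩ := hv'S
        have hit : i = t := by
          by_contra hne'
          exact hw2 (hwhite i (lt_of_le_of_ne hi hne') w hadjw)
        rw [hit] at hadjw hforce
        -- uniqueness of the newly forced vertex
        have huniq : ∀ w', w' ∈ propSet G {v} (t + 1) → w' ∉ propSet G {v} t → w' = w := by
          intro w' h1 h2
          have h1' : w' ∈ forceStep G (propSet G {v} t) := h1
          simp only [forceStep, Set.mem_union, Set.mem_setOf_eq] at h1'
          rcases h1' with h | ⟨v'', hv''S, hadj'', -⟩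
          · exact absurd h h2
          rw [hset] at hv''S
          obtain ⟨i'', hi'', rfl⟩ := hv''S
          have hit'' : i'' = t := by
            by_contra hne'
            exact h2 (hwhite i'' (lt_of_le_of_ne hi'' hne') w' hadj'')
          rw [hit''] at hadj''
          exact hforce w' hadj'' h2
        set f' : ℕ → V := fun k => if k = t + 1 then w else f k with hf'def
        have hfi : ∀ k, k ≤ t → f' k = f k := fun k hk => if_neg (by omega)
        have hf'top : f' (t + 1) = w := if_pos rfl
        refine ⟨f', ?_, ?_, ?_, ?_⟩
        · ext x
          simp only [Set.mem_setOf_eq]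
          constructor
          · intro hx
            by_cases hxS : x ∈ propSet G {v} t
            · rw [hset] at hxS
              obtain ⟨k, hk, rfl⟩ := hxS
              exact ⟨k, by omega, (hfi k hk)⟩
            · exact ⟨t + 1, le_rfl, hf'top.trans (huniq x hx hxS).symm⟩
          · rintro ⟨k, hk, rfl⟩
            rcases Nat.lt_or_ge k (t + 1) with h | h
            · rw [hfi k (by omega)]
              exact propSet_subset_succ G _ t (hset ▸ ⟨k, by omega, rfl⟩)
            · have hk1 : k = t + 1 := le_antisymm hk h
              subst hk1
              rw [hf'top]
              exact hw1
        · intro a ha b hb hab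
          by_cases ha1 : a = t + 1 <;> by_cases hb1 : b = t + 1
          · omega
          · exfalso
            rw [ha1, hf'top, hfi b (by omega)] at hab
            exact hw2 (hset ▸ ⟨b, by omega, hab.symm⟩)
          · exfalso
            rw [hb1, hf'top, hfi a (by omega)] at hab
            exact hw2 (hset ▸ ⟨a, by omega, hab⟩)
          · rw [hfi a (by omega), hfi b (by omega)] at hab
            exact hinj a (by omega) b (by omega) hab
        · intro a ha b hb
          by_cases ha1 : a = t + 1 <;> by_cases hb1 : b = t + 1
          · subst ha1; subst hb1
            rw [hf'top]
            simp only [SimpleGraph.irrefl, false_iff]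
            omega
          · subst ha1
            rw [hf'top, hfi b (by omega)]
            constructor
            · intro hA
              have hbt : b = t := by
                by_contra hne'
                exact hw2 (hwhite b (by omega) w hA.symm)
              omega
            · intro h
              have hbt : b = t := by omega
              subst hbt
              exact hadjw.symm
          · subst hb1
            rw [hf'top, hfi a (by omega)]
            constructor
            · intro hA
              have hat : a = t := by
                by_contra hne'
                exact hw2 (hwhite a (by omega) w hA)
              omega
            · intro h
              have hat : a = t := by omega
              subst hat
              exact hadjw
          · rw [hfi a (by omega), hfi b (by omega)]
            exact hadj a (by omega) b (by omega)
        · intro a ha u hu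
          rw [hfi a (by omega)] at hu
          by_cases hat : a = t
          · rw [hat] at hu
            by_cases huS : u ∈ propSet G {v} t
            · exact propSet_subset_succ G _ t huS
            · rw [hforce u hu huS]
              exact hw1
          · exact propSet_subset_succ G _ t (hwhite a (by omega) u hu)
  set T := ptSet G {v} with hTdef
  obtain ⟨f, hset, hinj, hadjf, -⟩ := key T le_rfl
  have huniv : {x | ∃ i ≤ T, f i = x} = Set.univ := by
    rw [← hset]
    exact propSet_ptSet G hv
  have hbij : Function.Bijective (fun i : Fin (T + 1) => f i.val) := by
    constructor
    · intro a b hab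
      exact Fin.ext (hinj a.val (Nat.lt_succ_iff.mp a.isLt) b.val (Nat.lt_succ_iff.mp b.isLt) hab)
    · intro x
      have hx : x ∈ {x | ∃ i ≤ T, f i = x} := by rw [huniv]; trivial
      obtain ⟨i, hi, hfi⟩ := hx
      exact ⟨⟨i, Nat.lt_succ_iff.mpr hi⟩, hfi⟩
  refine ⟨T + 1, Nat.succ_pos T, ⟨SimpleGraph.Iso.symm ⟨Equiv.ofBijective _ hbij, ?_⟩⟩⟩
  intro a b
  show G.Adj (f a.val) (f b.val) ↔ (SimpleGraph.pathGraph (T + 1)).Adj a b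
  rw [SimpleGraph.pathGraph_adj]
  exact hadjf a.val (Nat.lt_succ_iff.mp a.isLt) b.val (Nat.lt_succ_iff.mp b.isLt)

end Main
/-- The following are equivalent: `pt(G) = |G| - 1`; `PT(G) = |G| - 1`;
`Z(G) = 1`; `G` is a path. -/
theorem pt_eq_card_sub_one_tfae {V : Type*} [Finite V] (G : SimpleGraph V) :
    List.TFAE [ptMin G + 1 = Nat.card V,
      ptMax G + 1 = Nat.card V,
      zfNum G = 1,
      ∃ n, 0 < n ∧ Nonempty (G ≃g SimpleGraph.pathGraph n)] := by
  have himg_ne : (ptSet G '' {B | IsMinZFSet G B}).Nonempty := by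
    obtain ⟨B, hB⟩ := exists_minZFSet G
    exact ⟨ptSet G B, B, hB, rfl⟩
  tfae_have 1 → 3
  | h => by
    obtain ⟨B, hBmin, hBpt⟩ := Nat.sInf_mem himg_ne
    haveI : Nonempty V := (Nat.card_pos_iff.mp (by omega)).1
    have h1 := ptSet_add_ncard_le G hBmin.1
    have h2 : ptSet G B = ptMin G := hBpt
    have h3 := one_le_zfNum G
    have h4 : B.ncard = zfNum G := hBmin.2
    omega
  tfae_have 2 → 3
  | h => by
    have hbdd : BddAbove (ptSet G '' {B | IsMinZFSet G B}) := by
      refine ⟨Nat.card V, ?_⟩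
      rintro x ⟨B, hB, rfl⟩
      have := ptSet_add_ncard_le G hB.1
      omega
    obtain ⟨B, hBmin, hBpt⟩ := Nat.sSup_mem himg_ne hbdd
    haveI : Nonempty V := (Nat.card_pos_iff.mp (by omega)).1
    have h1 := ptSet_add_ncard_le G hBmin.1
    have h2 : ptSet G B = ptMax G := hBpt
    have h3 := one_le_zfNum G
    have h4 : B.ncard = zfNum G := hBmin.2
    omega
  tfae_have 3 → 4
  | h => by
    obtain ⟨B, hBzf, hBc⟩ := Nat.sInf_mem (zfNum_set_nonempty G)
    have hBc1 : B.ncard = 1 := by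
      have : B.ncard = zfNum G := hBc
      omega
    obtain ⟨u, rfl⟩ := Set.ncard_eq_one.mp hBc1
    exact singleton_zf_path hBzf
  tfae_have 4 → 1
  | ⟨n, hn, ⟨iso⟩⟩ => by
    obtain ⟨-, h1, -, h3⟩ := path_case hn iso.symm.toEquiv
      (fun i j => (iso.symm.map_adj_iff).trans SimpleGraph.pathGraph_adj)
    omega
  tfae_have 4 → 2
  | ⟨n, hn, ⟨iso⟩⟩ => by
    obtain ⟨-, -, h2, h3⟩ := path_case hn iso.symm.toEquiv
      (fun i j => (iso.symm.map_adj_iff).trans SimpleGraph.pathGraph_adj)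
    omega
  tfae_finish
end
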